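/- Let n be a positive integer and a ∈ 𝒵(n). Define X_a to be the set of admissible arcs consisting of: (i) the projective arc at the residue class of j, for each j ∈ {1, …, n} with a'_j = ‖a'‖; and (ii) for each l ∈ {1, …, n} and each s ∈ {1, …, a_l − δ_l}, the inner arc (k_s^l mod n, l − k_s^l). Then X_a is a triangulation of the punctured n-gon and top(X_a) = a. -/

import Mathlib

/-!
Combinatorial model of admissible arcs and triangulations of a regular
`n`-gon with one puncture (following Adachi, "The classification of
τ-tilting modules over Nakayama algebras").
-/

namespace Punctured

/-- Admissible arcs in a regular `n`-gon with one puncture: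
an *inner arc* `inner i t` runs counterclockwise from vertex `i` to vertex
`i + t` (with `2 ≤ t ≤ n` required for admissibility); a *projective arc*
`proj j` runs from the puncture to the vertex `j`. -/
inductive Arc (n : ℕ) : Type
  | inner (i : ZMod n) (t : ℕ) : Arc n
  | proj (j : ZMod n) : Arc n

namespace Arc

/-- The terminal point of an admissible arc. -/
def terminal {n : ℕ} : Arc n → ZMod n
  | .inner i t => i + (t : ZMod n)
  | .proj j => j

/-- Admissibility: inner arcs must have length `2 ≤ t ≤ n`. -/
def IsAdmissible {n : ℕ} : Arc n → Prop
  | .inner _ t => 2 ≤ t ∧ t ≤ n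
  | .proj _ => True

/-- Compatibility (non-crossing) of two admissible arcs, defined via
lifts to `ℤ`. -/
def Compatible {n : ℕ} : Arc n → Arc n → Prop
  | .inner i t, .inner k s =>
      ¬ ∃ x y : ℤ, (x : ZMod n) = i ∧ (y : ZMod n) = k ∧
        ((x < y ∧ y < x + (t : ℤ) ∧ x + (t : ℤ) < y + (s : ℤ)) ∨
         (y < x ∧ x < y + (s : ℤ) ∧ y + (s : ℤ) < x + (t : ℤ)))
  | .inner i t, .proj j =>
      ¬ ∃ x y : ℤ, (x : ZMod n) = i ∧ (y : ZMod n) = j ∧ x < y ∧ y < x + (t : ℤ)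
  | .proj j, .inner i t =>
      ¬ ∃ x y : ℤ, (x : ZMod n) = i ∧ (y : ZMod n) = j ∧ x < y ∧ y < x + (t : ℤ)
  | .proj _, .proj _ => True

end Arc

/-- A set of admissible arcs which is pairwise compatible. -/
def PairwiseCompatible (n : ℕ) (X : Set (Arc n)) : Prop :=
  (∀ a ∈ X, a.IsAdmissible) ∧ ∀ a ∈ X, ∀ b ∈ X, a.Compatible b

/-- A triangulation of the punctured `n`-gon: a pairwise compatible set of
admissible arcs, maximal under inclusion among such sets. -/
def IsTriangulation (n : ℕ) (X : Set (Arc n)) : Prop :=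
  PairwiseCompatible n X ∧
    ∀ Y : Set (Arc n), PairwiseCompatible n Y → X ⊆ Y → Y = X

/-- `top(X)`: for each residue class `c`, the number of arcs of `X` with
terminal point `c`. -/
noncomputable def topSeq (n : ℕ) (X : Set (Arc n)) : ZMod n → ℕ :=
  fun c => {arc ∈ X | Arc.terminal arc = c}.ncard

/-- The representative of `p` modulo `n` lying in `{1, …, n}`. -/
def resRep (n : ℕ) (p : ℤ) : ℕ := ((p - 1) % (n : ℤ)).toNat + 1

/-- `a'_p := Σ_{j=1}^{(p)_n} (a_j - 1)`, the `n`-periodic extension of the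
partial-sum sequence of `a`. -/
def psum (n : ℕ) (a : ZMod n → ℕ) (p : ℤ) : ℤ :=
  ∑ j ∈ Finset.Icc 1 (resRep n p), ((a ((j : ℕ) : ZMod n) : ℤ) - 1)

/-- `‖a'‖ := max {a'_1, …, a'_n}`. -/
noncomputable def pnorm (n : ℕ) (a : ZMod n → ℕ) : ℤ :=
  sSup ((fun i : ℕ => psum n a (i : ℤ)) '' Set.Icc 1 n)

/-- `δ_p = 1` if `a'_p = ‖a'‖` and `δ_p = 0` otherwise. -/
noncomputable def deltaInt (n : ℕ) (a : ZMod n → ℕ) (p : ℤ) : ℤ :=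
  if psum n a p = pnorm n a then 1 else 0

/-- `k_s^j := max {k ∈ ℤ : k < j - 1 and a'_k = a'_{j-1} + s}`. -/
noncomputable def kmax (n : ℕ) (a : ZMod n → ℕ) (j s : ℤ) : ℤ :=
  sSup {k : ℤ | k < j - 1 ∧ psum n a k = psum n a (j - 1) + s}

/-- `ℓ_j(a)`. -/
noncomputable def ellj (n : ℕ) (a : ZMod n → ℕ) (j : ℕ) : ℤ :=
  if (a ((j : ℕ) : ZMod n) : ℤ) - deltaInt n a (j : ℤ) = 0 then 0
  else (j : ℤ) - kmax n a (j : ℤ) ((a ((j : ℕ) : ZMod n) : ℤ) - deltaInt n a (j : ℤ))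

/-- The candidate triangulation `X_a` associated to a sequence `a ∈ 𝒵(n)`:
it consists of the projective arcs at (the residue classes of) those
`j ∈ {1, …, n}` with `a'_j = ‖a'‖`, together with, for each `l ∈ {1, …, n}`
and each `s ∈ {1, …, a_l − δ_l}`, the inner arc `(k_s^l mod n, l − k_s^l)`. -/
noncomputable def Xa (n : ℕ) (a : ZMod n → ℕ) : Set (Arc n) :=
  {arc | (∃ j ∈ Finset.Icc 1 n, psum n a (j : ℤ) = pnorm n a ∧
            arc = Arc.proj ((j : ℕ) : ZMod n)) ∨
    (∃ l ∈ Finset.Icc 1 n, ∃ s : ℤ, 1 ≤ s ∧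
        s ≤ (a ((l : ℕ) : ZMod n) : ℤ) - deltaInt n a (l : ℤ) ∧
        arc = Arc.inner ((kmax n a (l : ℤ) s : ℤ) : ZMod n)
          ((l : ℤ) - kmax n a (l : ℤ) s).toNat)}


section Lemmas

variable {n : ℕ} {a : ZMod n → ℕ}

lemma resRep_pos (n : ℕ) (p : ℤ) : 1 ≤ resRep n p := Nat.le_add_left 1 _

lemma resRep_le (hn : 0 < n) (p : ℤ) : resRep n p ≤ n := by
  have h1 : (p - 1) % (n : ℤ) < n := Int.emod_lt_of_pos _ (by exact_mod_cast hn)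
  have h2 : (0:ℤ) ≤ (p - 1) % (n : ℤ) := Int.emod_nonneg _ (by exact_mod_cast hn.ne')
  unfold resRep
  omega

lemma intCast_resRep (hn : 0 < n) (p : ℤ) :
    (((resRep n p : ℕ) : ℤ) : ZMod n) = (p : ZMod n) := by
  rw [ZMod.intCast_eq_intCast_iff']
  have h2 : (0:ℤ) ≤ (p - 1) % (n : ℤ) := Int.emod_nonneg _ (by exact_mod_cast hn.ne')
  have h3 : ((resRep n p : ℕ) : ℤ) = (p - 1) % (n : ℤ) + 1 := by
    unfold resRep; push_cast [Int.toNat_of_nonneg h2]; ring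
  rw [h3]
  have : (p - 1) % (n : ℤ) ≡ p - 1 [ZMOD n] := Int.emod_emod_of_dvd _ dvd_rfl
  simpa using this.add_right 1

lemma resRep_eq_of_mem (hn : 0 < n) {p : ℤ} (h1 : 1 ≤ p) (h2 : p ≤ n) :
    (resRep n p : ℤ) = p := by
  have : (p - 1) % (n : ℤ) = p - 1 := Int.emod_eq_of_lt (by omega) (by omega)
  unfold resRep; push_cast [this, Int.toNat_of_nonneg (show (0:ℤ) ≤ p - 1 by omega)]; ring

lemma resRep_congr (hn : 0 < n) {p q : ℤ} (h : (p : ZMod n) = (q : ZMod n)) :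
    resRep n p = resRep n q := by
  rw [ZMod.intCast_eq_intCast_iff'] at h
  obtain ⟨c, hc⟩ := Int.ModEq.dvd h
  have hp : p = q + (-c) * n := by linarith
  rw [hp]
  unfold resRep
  rw [show q + (-c) * (n:ℤ) - 1 = q - 1 + (-c) * n by ring, Int.add_mul_emod_self_right]

lemma psum_congr (hn : 0 < n) {p q : ℤ} (h : (p : ZMod n) = (q : ZMod n)) :
    psum n a p = psum n a q := by
  unfold psum; rw [resRep_congr hn h]

lemma intCast_add_mul_n (p c : ℤ) : ((p + c * n : ℤ) : ZMod n) = (p : ZMod n) := by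
  push_cast
  simp [ZMod.natCast_self]

lemma psum_add_mul (hn : 0 < n) (a : ZMod n → ℕ) (p c : ℤ) :
    psum n a (p + c * n) = psum n a p :=
  psum_congr hn (intCast_add_mul_n p c)

lemma psum_resRep (hn : 0 < n) (a : ZMod n → ℕ) (p : ℤ) :
    psum n a ((resRep n p : ℕ) : ℤ) = psum n a p :=
  psum_congr hn (intCast_resRep hn p)

end Lemmas


section StepLemmas

variable {n : ℕ} {a : ZMod n → ℕ}

/-- The fundamental step relation `a'_p = a'_{p-1} + (a_p - 1)`. -/
lemma psum_step (hn : 0 < n)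
    (ha : ∑ p ∈ Finset.Icc 1 n, a ((p : ℕ) : ZMod n) = n) (p : ℤ) :
    psum n a p = psum n a (p - 1) + ((a ((p : ℤ) : ZMod n) : ℤ) - 1) := by
  set r := resRep n p with hr
  have hr1 : 1 ≤ r := resRep_pos n p
  have hrn : r ≤ n := resRep_le hn p
  have hcast : ((r : ℕ) : ZMod n) = ((p : ℤ) : ZMod n) := by
    have := intCast_resRep hn p
    rw [← this]; exact (Int.cast_natCast r).symm
  have hpsum : psum n a p = ∑ j ∈ Finset.Icc 1 r, ((a ((j : ℕ) : ZMod n) : ℤ) - 1) := rfl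
  rcases eq_or_lt_of_le hr1 with h1 | h1
  · -- r = 1
    have hres : resRep n (p - 1) = n := by
      have hc : ((p - 1 : ℤ) : ZMod n) = ((n : ℤ) : ZMod n) := by
        have hpc : ((p : ℤ) : ZMod n) = ((1 : ℤ) : ZMod n) := by
          rw [← hcast, ← h1]; norm_num
        have : ((n : ℤ) : ZMod n) = 0 := by push_cast; simp [ZMod.natCast_self]
        rw [this]
        have := congrArg (· - (1 : ZMod n)) hpc
        simpa using this
      have := resRep_congr (n := n) hn hc
      rw [this]
      have := resRep_eq_of_mem hn (show (1:ℤ) ≤ (n:ℤ) by exact_mod_cast hn)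
        (le_refl (n:ℤ))
      exact_mod_cast this
    have hzero : psum n a (p - 1) = 0 := by
      have : psum n a (p - 1) = ∑ j ∈ Finset.Icc 1 n, ((a ((j : ℕ) : ZMod n) : ℤ) - 1) := by
        unfold psum; rw [hres]
      rw [this, Finset.sum_sub_distrib]
      have hsum : ∑ j ∈ Finset.Icc 1 n, (a ((j : ℕ) : ZMod n) : ℤ) = (n : ℤ) := by
        exact_mod_cast congrArg (Nat.cast : ℕ → ℤ) ha
      simp [hsum, Nat.card_Icc]
    rw [hzero, hpsum, ← h1]
    have hc1 := hcast
    rw [← h1] at hc1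
    push_cast at hc1
    rw [show Finset.Icc 1 1 = {1} from Finset.Icc_self 1, Finset.sum_singleton]
    rw [show ((1:ℕ) : ZMod n) = ((p : ℤ) : ZMod n) by push_cast; exact hc1]
    ring
  · -- 2 ≤ r
    have hres : resRep n (p - 1) = r - 1 := by
      have hc : ((p - 1 : ℤ) : ZMod n) = (((r:ℤ) - 1 : ℤ) : ZMod n) := by
        have := intCast_resRep hn p
        push_cast at this ⊢
        rw [this]
      have h2 := resRep_congr (n := n) hn hc
      have h3 := resRep_eq_of_mem hn (show (1:ℤ) ≤ (r:ℤ) - 1 by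
        exact_mod_cast (by omega : (1:ℤ) ≤ (r:ℤ) - 1)) (by
          have : (r:ℤ) ≤ n := by exact_mod_cast hrn
          omega)
      rw [h2]
      omega
    have hsplit : psum n a p =
        (∑ j ∈ Finset.Icc 1 (r-1), ((a ((j : ℕ) : ZMod n) : ℤ) - 1))
          + ((a ((r : ℕ) : ZMod n) : ℤ) - 1) := by
      rw [hpsum, show r = (r - 1) + 1 by omega, Finset.sum_Icc_succ_top (by omega)]
      simp
    have hps1 : psum n a (p - 1)
        = ∑ j ∈ Finset.Icc 1 (r-1), ((a ((j : ℕ) : ZMod n) : ℤ) - 1) := by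
      unfold psum; rw [hres]
    rw [hsplit, hps1, hcast]

lemma psum_step_le (hn : 0 < n)
    (ha : ∑ p ∈ Finset.Icc 1 n, a ((p : ℕ) : ZMod n) = n) (p : ℤ) :
    psum n a (p - 1) ≤ psum n a p + 1 := by
  have := psum_step (a := a) hn ha p
  have h0 : (0:ℤ) ≤ (a ((p : ℤ) : ZMod n) : ℤ) := Int.natCast_nonneg _
  omega

lemma psum_le_pnorm (hn : 0 < n) (a : ZMod n → ℕ) (p : ℤ) :
    psum n a p ≤ pnorm n a := by
  have hmem : psum n a p ∈ ((fun i : ℕ => psum n a (i : ℤ)) '' Set.Icc 1 n) := by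
    refine ⟨resRep n p, ⟨resRep_pos n p, resRep_le hn p⟩, ?_⟩
    exact psum_resRep hn a p
  exact le_csSup (((Set.finite_Icc 1 n).image _).bddAbove) hmem

lemma exists_psum_eq_pnorm (hn : 0 < n) (a : ZMod n → ℕ) :
    ∃ j : ℕ, 1 ≤ j ∧ j ≤ n ∧ psum n a (j : ℤ) = pnorm n a := by
  have hne : ((fun i : ℕ => psum n a (i : ℤ)) '' Set.Icc 1 n).Nonempty :=
    ⟨psum n a 1, 1, ⟨le_refl 1, hn⟩, rfl⟩
  have := hne.csSup_mem ((Set.finite_Icc 1 n).image _)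
  obtain ⟨j, hj, hjeq⟩ := this
  exact ⟨j, hj.1, hj.2, hjeq⟩

lemma deltaInt_nonneg (n : ℕ) (a : ZMod n → ℕ) (p : ℤ) : 0 ≤ deltaInt n a p := by
  unfold deltaInt; split <;> norm_num

lemma deltaInt_le_one (n : ℕ) (a : ZMod n → ℕ) (p : ℤ) : deltaInt n a p ≤ 1 := by
  unfold deltaInt; split <;> norm_num

lemma deltaInt_congr (hn : 0 < n) {p q : ℤ} (h : (p : ZMod n) = (q : ZMod n)) :
    deltaInt n a p = deltaInt n a q := by
  unfold deltaInt; rw [psum_congr hn h]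

lemma exists_pnorm_le (hn : 0 < n) (a : ZMod n → ℕ) (x : ℤ) :
    ∃ q : ℤ, q ≤ x ∧ psum n a q = pnorm n a := by
  obtain ⟨j, hj1, hj2, hj3⟩ := exists_psum_eq_pnorm hn a
  refine ⟨(j : ℤ) + (-(max ((j : ℤ) - x) 0)) * n, ?_, ?_⟩
  · have h1 : (j:ℤ) - x ≤ max ((j : ℤ) - x) 0 := le_max_left _ _
    have h2 : (0:ℤ) ≤ max ((j : ℤ) - x) 0 := le_max_right _ _
    have h3 : max ((j : ℤ) - x) 0 ≤ max ((j : ℤ) - x) 0 * n := by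
      nlinarith [(by exact_mod_cast hn : (1:ℤ) ≤ n)]
    have h4 : (-(max ((j:ℤ)-x) 0)) * (n:ℤ) = -(max ((j:ℤ)-x) 0 * n) := by ring
    omega
  · rw [psum_add_mul hn a _ _]; exact hj3

lemma exists_pnorm_ge (hn : 0 < n) (a : ZMod n → ℕ) (x : ℤ) :
    ∃ q : ℤ, x ≤ q ∧ psum n a q = pnorm n a := by
  obtain ⟨j, hj1, hj2, hj3⟩ := exists_psum_eq_pnorm hn a
  refine ⟨(j : ℤ) + (max (x - (j : ℤ)) 0) * n, ?_, ?_⟩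
  · have h1 : x - (j:ℤ) ≤ max (x - (j : ℤ)) 0 := le_max_left _ _
    have h2 : (0:ℤ) ≤ max (x - (j : ℤ)) 0 := le_max_right _ _
    have h3 : max (x - (j : ℤ)) 0 ≤ max (x - (j : ℤ)) 0 * n := by
      nlinarith [(by exact_mod_cast hn : (1:ℤ) ≤ n)]
    omega
  · rw [psum_add_mul hn a _ _]; exact hj3

/-- Discrete intermediate value theorem, walking left: if the value at `lo`
is at least `v` and the value at `hi` is below `v`, there is a last position
`k` where the value is exactly `v`. -/
lemma ivt_aux (hn : 0 < n)
    (ha : ∑ p ∈ Finset.Icc 1 n, a ((p : ℕ) : ZMod n) = n) (v : ℤ) :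
    ∀ N : ℕ, ∀ lo hi : ℤ, hi = lo + N → v ≤ psum n a lo → psum n a hi < v →
    ∃ k, lo ≤ k ∧ k < hi ∧ psum n a k = v ∧
      ∀ m, k < m → m ≤ hi → psum n a m < v := by
  intro N
  induction N with
  | zero =>
    intro lo hi h hlo hhi
    exfalso; rw [h] at hhi; simp at hhi; omega
  | succ N ih =>
    intro lo hi h hlo hhi
    by_cases hc : psum n a (hi - 1) < v
    · obtain ⟨k, h1, h2, h3, h4⟩ := ih lo (hi - 1) (by omega) hlo hc
      refine ⟨k, h1, by omega, h3, fun m hm1 hm2 => ?_⟩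
      rcases lt_or_eq_of_le hm2 with hm | hm
      · exact h4 m hm1 (by omega)
      · rw [hm]; exact hhi
    · push_neg at hc
      have hstep := psum_step_le (a := a) hn ha hi
      have heq : psum n a (hi - 1) = v := by omega
      refine ⟨hi - 1, by omega, by omega, heq, fun m hm1 hm2 => ?_⟩
      have : m = hi := by omega
      rw [this]; exact hhi

lemma ivt (hn : 0 < n)
    (ha : ∑ p ∈ Finset.Icc 1 n, a ((p : ℕ) : ZMod n) = n) {v lo hi : ℤ}
    (hle : lo ≤ hi) (hlo : v ≤ psum n a lo) (hhi : psum n a hi < v) :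
    ∃ k, lo ≤ k ∧ k < hi ∧ psum n a k = v ∧
      ∀ m, k < m → m ≤ hi → psum n a m < v :=
  ivt_aux hn ha v (hi - lo).toNat lo hi (by omega) hlo hhi

end StepLemmas


section KmaxLemmas

variable {n : ℕ} {a : ZMod n → ℕ}

lemma target_le_pnorm (hn : 0 < n)
    (ha : ∑ p ∈ Finset.Icc 1 n, a ((p : ℕ) : ZMod n) = n) {l s : ℤ}
    (hs1 : 1 ≤ s) (hs2 : s ≤ (a ((l : ℤ) : ZMod n) : ℤ) - deltaInt n a l) :
    psum n a (l - 1) + s ≤ pnorm n a := by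
  have hstep := psum_step hn ha l
  have hle := psum_le_pnorm hn a l
  unfold deltaInt at hs2
  split_ifs at hs2 with h
  · omega
  · have : psum n a l < pnorm n a := lt_of_le_of_ne hle h
    omega

lemma kmax_set_nonempty (hn : 0 < n)
    (ha : ∑ p ∈ Finset.Icc 1 n, a ((p : ℕ) : ZMod n) = n) {l s : ℤ}
    (hs1 : 1 ≤ s) (hs2 : s ≤ (a ((l : ℤ) : ZMod n) : ℤ) - deltaInt n a l) :
    {k : ℤ | k < l - 1 ∧ psum n a k = psum n a (l - 1) + s}.Nonempty := by
  obtain ⟨q, hq, hqp⟩ := exists_pnorm_le hn a (l - 1)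
  have htar := target_le_pnorm hn ha hs1 hs2
  obtain ⟨k, hk1, hk2, hk3, _⟩ :=
    ivt (v := psum n a (l - 1) + s) hn ha hq (by rw [hqp]; exact htar) (by omega)
  exact ⟨k, hk2, hk3⟩

lemma kmax_bddAbove (n : ℕ) (a : ZMod n → ℕ) (l s : ℤ) :
    BddAbove {k : ℤ | k < l - 1 ∧ psum n a k = psum n a (l - 1) + s} :=
  ⟨l - 2, fun y hy => by have := hy.1; omega⟩

lemma kmax_spec (hn : 0 < n)
    (ha : ∑ p ∈ Finset.Icc 1 n, a ((p : ℕ) : ZMod n) = n) {l s : ℤ}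
    (hs1 : 1 ≤ s) (hs2 : s ≤ (a ((l : ℤ) : ZMod n) : ℤ) - deltaInt n a l) :
    kmax n a l s < l - 1 ∧ psum n a (kmax n a l s) = psum n a (l - 1) + s :=
  Int.csSup_mem (kmax_set_nonempty hn ha hs1 hs2) (kmax_bddAbove n a l s)

lemma kmax_interior (hn : 0 < n)
    (ha : ∑ p ∈ Finset.Icc 1 n, a ((p : ℕ) : ZMod n) = n) {l s : ℤ}
    (hs1 : 1 ≤ s) (hs2 : s ≤ (a ((l : ℤ) : ZMod n) : ℤ) - deltaInt n a l) :
    ∀ m, kmax n a l s < m → m < l → psum n a m < psum n a (l - 1) + s := by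
  intro m h1 h2
  rcases lt_or_eq_of_le (show m ≤ l - 1 by omega) with hm | hm
  · by_contra hcon
    push_neg at hcon
    obtain ⟨k, hk1, hk2, hk3, _⟩ := ivt hn ha (le_of_lt hm) hcon (by omega)
    have : k ≤ kmax n a l s :=
      le_csSup (kmax_bddAbove n a l s) ⟨hk2, hk3⟩
    omega
  · rw [hm]; omega

lemma kmax_gt (hn : 0 < n)
    (ha : ∑ p ∈ Finset.Icc 1 n, a ((p : ℕ) : ZMod n) = n) {l s : ℤ}
    (hs1 : 1 ≤ s) (hs2 : s ≤ (a ((l : ℤ) : ZMod n) : ℤ) - deltaInt n a l) :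
    l - 1 - n < kmax n a l s := by
  by_contra h
  push_neg at h
  obtain ⟨hlt, heq⟩ := kmax_spec hn ha hs1 hs2
  have hper : psum n a (kmax n a l s + 1 * n) = psum n a (kmax n a l s) :=
    psum_add_mul hn a _ 1
  rcases lt_or_eq_of_le (show kmax n a l s + n ≤ l - 1 by omega) with hc | hc
  · have : kmax n a l s + n ≤ kmax n a l s :=
      le_csSup (kmax_bddAbove n a l s) ⟨hc, by rw [show kmax n a l s + (n:ℤ)
        = kmax n a l s + 1 * n by ring, hper]; exact heq⟩
    omega
  · have h2 : psum n a (l - 1) = psum n a (kmax n a l s) := by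
      rw [← hc, show kmax n a l s + (n:ℤ) = kmax n a l s + 1 * n by ring, hper]
    omega

lemma kmax_unique {l s x : ℤ} (h1 : x < l - 1)
    (h2 : psum n a x = psum n a (l - 1) + s)
    (h3 : ∀ k, x < k → k < l - 1 → psum n a k ≠ psum n a (l - 1) + s) :
    kmax n a l s = x := by
  apply le_antisymm
  · refine csSup_le ⟨x, ⟨h1, h2⟩⟩ fun k hk => ?_
    obtain ⟨hk1, hk2⟩ := hk
    by_contra hc
    push_neg at hc
    exact h3 k hc hk1 hk2
  · exact le_csSup (kmax_bddAbove n a l s) ⟨h1, h2⟩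

lemma kmax_shift (hn : 0 < n)
    (ha : ∑ p ∈ Finset.Icc 1 n, a ((p : ℕ) : ZMod n) = n) {l s : ℤ}
    (hs1 : 1 ≤ s) (hs2 : s ≤ (a ((l : ℤ) : ZMod n) : ℤ) - deltaInt n a l) (c : ℤ) :
    kmax n a (l + c * n) s = kmax n a l s + c * n := by
  obtain ⟨hlt, heq⟩ := kmax_spec hn ha hs1 hs2
  have hper1 : psum n a (l + c * n - 1) = psum n a (l - 1) := by
    rw [show l + c * n - 1 = (l - 1) + c * n by ring]; exact psum_add_mul hn a _ c
  apply kmax_unique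
  · omega
  · rw [psum_add_mul hn a _ c, hper1]; exact heq
  · intro k hk1 hk2 hkeq
    have hk' : psum n a (k - c * n) = psum n a (l - 1) + s := by
      rw [show k - c * n = k + (-c) * n by ring, psum_add_mul hn a _ (-c), hkeq, hper1]
    have := kmax_interior hn ha hs1 hs2 (k - c * n) (by omega) (by omega)
    omega

end KmaxLemmas


section ModelLemmas

variable {n : ℕ} {a : ZMod n → ℕ}

/-- Sufficient condition for an inner arc, given by an integer model, to lie
in `Xa`. -/
lemma mem_Xa_inner (hn : 0 < n)
    (ha : ∑ p ∈ Finset.Icc 1 n, a ((p : ℕ) : ZMod n) = n) {i0 l0 : ℤ}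
    (h2 : i0 + 2 ≤ l0) (hle : l0 ≤ i0 + n)
    (hA : ∀ m, i0 < m → m < l0 → psum n a m < psum n a i0)
    (hB : psum n a i0 ≤ psum n a l0 + 1 - deltaInt n a l0) :
    Arc.inner ((i0 : ZMod n)) ((l0 - i0).toNat) ∈ Xa n a := by
  set s := psum n a i0 - psum n a (l0 - 1) with hs
  have hstep := psum_step hn ha l0
  have hs1 : 1 ≤ s := by have := hA (l0 - 1) (by omega) (by omega); omega
  have hs2 : s ≤ (a ((l0 : ℤ) : ZMod n) : ℤ) - deltaInt n a l0 := by omega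
  have hk0 : kmax n a l0 s = i0 :=
    kmax_unique (by omega) (by omega)
      (fun k hk1 hk2 => by have := hA k hk1 (by omega); omega)
  set lt := resRep n l0 with hltdef
  have hlt1 : 1 ≤ lt := resRep_pos n l0
  have hltn : lt ≤ n := resRep_le hn l0
  have hcast : (((lt : ℕ) : ℤ) : ZMod n) = ((l0 : ℤ) : ZMod n) := intCast_resRep hn l0
  have hdvd : (n : ℤ) ∣ l0 - (lt : ℤ) := by
    rw [ZMod.intCast_eq_intCast_iff'] at hcast
    exact Int.ModEq.dvd hcast
  obtain ⟨c, hc⟩ := hdvd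
  have hl0 : l0 = (lt : ℤ) + c * n := by linarith
  have hdelta : deltaInt n a (lt : ℤ) = deltaInt n a l0 := deltaInt_congr hn hcast
  have hs2' : s ≤ (a (((lt : ℤ) : ℤ) : ZMod n) : ℤ) - deltaInt n a (lt : ℤ) := by
    rw [show (((lt : ℤ) : ℤ) : ZMod n) = ((l0 : ℤ) : ZMod n) from hcast, hdelta]
    exact hs2
  have hshift := kmax_shift hn ha hs1 hs2' c
  rw [← hl0, hk0] at hshift
  -- hshift : i0 = kmax n a lt s + c * n
  right
  refine ⟨lt, Finset.mem_Icc.mpr ⟨hlt1, hltn⟩, s, hs1, ?_, ?_⟩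
  · rw [show ((lt : ℕ) : ZMod n) = (((lt : ℤ) : ℤ) : ZMod n) by push_cast; ring]
    exact hs2'
  · have hk : kmax n a (lt : ℤ) s = i0 - c * n := by omega
    rw [hk]
    congr 1
    · rw [show i0 - c * n = i0 + (-c) * n by ring]
      exact (intCast_add_mul_n i0 (-c)).symm
    · congr 1
      omega

/-- Every element of `Xa` admits an integer model. -/
lemma model_of_mem (hn : 0 < n)
    (ha : ∑ p ∈ Finset.Icc 1 n, a ((p : ℕ) : ZMod n) = n) {arc : Arc n}
    (h : arc ∈ Xa n a) :
    (∃ j : ℤ, psum n a j = pnorm n a ∧ arc = Arc.proj ((j : ℤ) : ZMod n)) ∨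
    (∃ i0 l0 : ℤ, i0 + 2 ≤ l0 ∧ l0 ≤ i0 + n ∧
      (∀ m, i0 < m → m < l0 → psum n a m < psum n a i0) ∧
      psum n a i0 ≤ psum n a l0 + 1 - deltaInt n a l0 ∧
      arc = Arc.inner ((i0 : ZMod n)) ((l0 - i0).toNat)) := by
  rcases h with ⟨j, _, hpj, harc⟩ | ⟨l, _, s, hs1, hs2, harc⟩
  · left
    exact ⟨(j : ℤ), hpj, by rw [harc]; congr 1; push_cast; ring⟩
  · right
    have hs2' : s ≤ (a (((l : ℤ) : ℤ) : ZMod n) : ℤ) - deltaInt n a (l : ℤ) := by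
      rw [show (((l : ℤ) : ℤ) : ZMod n) = ((l : ℕ) : ZMod n) by push_cast; ring]
      exact hs2
    obtain ⟨hlt, heq⟩ := kmax_spec hn ha hs1 hs2'
    have hgt := kmax_gt hn ha hs1 hs2'
    have hint := kmax_interior hn ha hs1 hs2'
    have hstep := psum_step hn ha (l : ℤ)
    refine ⟨kmax n a (l : ℤ) s, (l : ℤ), by omega, by omega, ?_, ?_, harc⟩
    · intro m h1 hm2
      rw [heq]
      exact hint m h1 hm2
    · rw [heq]; omega

/-- Transport of an inner model along a congruent lift. -/
lemma model_shift (hn : 0 < n) {i0 l0 x : ℤ}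
    (hx : (x : ZMod n) = ((i0 : ℤ) : ZMod n))
    (hA : ∀ m, i0 < m → m < l0 → psum n a m < psum n a i0) :
    psum n a x = psum n a i0 ∧ psum n a (x + (l0 - i0)) = psum n a l0 ∧
    deltaInt n a (x + (l0 - i0)) = deltaInt n a l0 ∧
    (∀ m, x < m → m < x + (l0 - i0) → psum n a m < psum n a x) := by
  rw [ZMod.intCast_eq_intCast_iff'] at hx
  obtain ⟨c, hc⟩ := Int.ModEq.dvd hx
  have hxe : x = i0 + (-c) * n := by linarith
  have hcast2 : ((x + (l0 - i0) : ℤ) : ZMod n) = ((l0 : ℤ) : ZMod n) := by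
    rw [hxe, show i0 + (-c) * (n:ℤ) + (l0 - i0) = l0 + (-c) * n by ring]
    exact intCast_add_mul_n l0 (-c)
  have hpx : psum n a x = psum n a i0 := by rw [hxe]; exact psum_add_mul hn a i0 (-c)
  refine ⟨hpx, ?_, deltaInt_congr hn hcast2, ?_⟩
  · exact psum_congr hn hcast2
  · intro m hm1 hm2
    have hcn : (-c) * (n:ℤ) = -(c * (n:ℤ)) := by ring
    have hm : psum n a m = psum n a (m + c * n) := (psum_add_mul hn a m c).symm
    rw [hm, hpx]
    exact hA (m + c * n) (by omega) (by omega)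

/-- `Xa` is pairwise compatible. -/
lemma Xa_pairwise (hn : 0 < n)
    (ha : ∑ p ∈ Finset.Icc 1 n, a ((p : ℕ) : ZMod n) = n) :
    PairwiseCompatible n (Xa n a) := by
  constructor
  · intro arc harc
    rcases model_of_mem hn ha harc with ⟨j, _, rfl⟩ | ⟨i0, l0, hb1, hb2, _, _, rfl⟩
    · trivial
    · exact ⟨by omega, by omega⟩
  · intro b1 hb1 b2 hb2
    rcases model_of_mem hn ha hb1 with ⟨j1, hp1, rfl⟩ | ⟨i1, l1, h11, h12, hA1, hB1, rfl⟩ <;>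
      rcases model_of_mem hn ha hb2 with ⟨j2, hp2, rfl⟩ | ⟨i2, l2, h21, h22, hA2, hB2, rfl⟩
    · trivial
    · -- proj vs inner
      rintro ⟨x, y, hx, hy, hlt1, hlt2⟩
      have ht : (((l2 - i2).toNat : ℕ) : ℤ) = l2 - i2 := Int.toNat_of_nonneg (by omega)
      rw [ht] at hlt2
      obtain ⟨hpx, _, _, hint⟩ := model_shift hn hx hA2
      have hyp : psum n a y = pnorm n a := (psum_congr hn hy).trans hp1
      have := hint y hlt1 (by omega)
      have h2 := psum_le_pnorm hn a x
      omega
    · -- inner vs proj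
      rintro ⟨x, y, hx, hy, hlt1, hlt2⟩
      have ht : (((l1 - i1).toNat : ℕ) : ℤ) = l1 - i1 := Int.toNat_of_nonneg (by omega)
      rw [ht] at hlt2
      obtain ⟨hpx, _, _, hint⟩ := model_shift hn hx hA1
      have hyp : psum n a y = pnorm n a := (psum_congr hn hy).trans hp2
      have := hint y hlt1 (by omega)
      have h2 := psum_le_pnorm hn a x
      omega
    · -- inner vs inner
      rintro ⟨x, y, hx, hy, hcross⟩
      have ht1 : (((l1 - i1).toNat : ℕ) : ℤ) = l1 - i1 := Int.toNat_of_nonneg (by omega)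
      have ht2 : (((l2 - i2).toNat : ℕ) : ℤ) = l2 - i2 := Int.toNat_of_nonneg (by omega)
      rw [ht1, ht2] at hcross
      obtain ⟨hpx, hpxe, hdx, hintx⟩ := model_shift hn hx hA1
      obtain ⟨hpy, hpye, hdy, hinty⟩ := model_shift hn hy hA2
      have hd1 := deltaInt_nonneg n a l1
      have hd2 := deltaInt_nonneg n a l2
      rcases hcross with ⟨hc1, hc2, hc3⟩ | ⟨hc1, hc2, hc3⟩
      · -- x < y < x + t1 < y + t2
        have e1 : psum n a y < psum n a x := hintx y hc1 hc2
        have e2 : psum n a (x + (l1 - i1)) < psum n a y := hinty _ hc2 hc3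
        have e3 : psum n a x ≤ psum n a l1 + 1 - deltaInt n a l1 := hpx ▸ hB1
        rw [← hpxe] at e3
        omega
      · -- y < x < y + t2 < x + t1
        have e1 : psum n a x < psum n a y := hinty x hc1 hc2
        have e2 : psum n a (y + (l2 - i2)) < psum n a x := hintx _ hc2 hc3
        have e3 : psum n a y ≤ psum n a l2 + 1 - deltaInt n a l2 := hpy ▸ hB2
        rw [← hpye] at e3
        omega

end ModelLemmas


section MaxLemmas

variable {n : ℕ} {a : ZMod n → ℕ}

/-- Every point strictly below the norm is covered by an arc of `Xa`. -/
lemma cover (hn : 0 < n)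
    (ha : ∑ p ∈ Finset.Icc 1 n, a ((p : ℕ) : ZMod n) = n) {p : ℤ}
    (hp : psum n a p < pnorm n a) :
    ∃ k l : ℤ, k < p ∧ p < l ∧ l ≤ k + n ∧ psum n a k = psum n a p + 1 ∧
      (∀ m, m < l - 1 → psum n a m = psum n a p + 1 → m ≤ k) ∧
      Arc.inner ((k : ZMod n)) ((l - k).toNat) ∈ Xa n a := by
  set S : Set ℤ := {x | p < x ∧ psum n a p + 1 ≤ psum n a x} with hS
  have hne : S.Nonempty := by
    obtain ⟨q, hq1, hq2⟩ := exists_pnorm_ge hn a (p + 1)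
    exact ⟨q, by omega, by rw [hq2]; omega⟩
  have hbdd : BddBelow S := ⟨p, fun x hx => le_of_lt hx.1⟩
  obtain ⟨hl1, hl2⟩ : p < sInf S ∧ psum n a p + 1 ≤ psum n a (sInf S) :=
    Int.csInf_mem hne hbdd
  set l := sInf S with hldef
  have hmin : ∀ x, p < x → x < l → psum n a x ≤ psum n a p := by
    intro x h1 h2
    by_contra hcx; push_neg at hcx
    have : l ≤ x := csInf_le hbdd ⟨h1, by omega⟩
    omega
  have hstep := psum_step hn ha l
  set s := psum n a p + 1 - psum n a (l - 1) with hsdef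
  have hpl1 : psum n a (l - 1) ≤ psum n a p := by
    rcases eq_or_lt_of_le (show p ≤ l - 1 by omega) with h | h
    · rw [← h]
    · exact hmin _ (by omega) (by omega)
  have hs1 : 1 ≤ s := by omega
  have hs2 : s ≤ (a ((l : ℤ) : ZMod n) : ℤ) - deltaInt n a l := by
    have hkey : psum n a p + deltaInt n a l ≤ psum n a l := by
      unfold deltaInt; split_ifs with h
      · omega
      · omega
    omega
  obtain ⟨hk1, hk2⟩ := kmax_spec hn ha hs1 hs2
  have hkgt := kmax_gt hn ha hs1 hs2
  have hkint := kmax_interior hn ha hs1 hs2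
  set k := kmax n a l s with hkdef
  have hkp : psum n a k = psum n a p + 1 := by omega
  have hklt : k < p := by
    rcases lt_trichotomy k p with h | h | h
    · exact h
    · exfalso; rw [h] at hkp; omega
    · exfalso; have := hmin k h (by omega); omega
  refine ⟨k, l, hklt, hl1, by omega, hkp, ?_, ?_⟩
  · intro m hm1 hm2
    exact le_csSup (kmax_bddAbove n a l s) ⟨hm1, by omega⟩
  · apply mem_Xa_inner hn ha (by omega) (by omega)
    · intro m h1 h2; have := hkint m h1 h2; omega
    · omega

/-- Maximality of `Xa`. -/
lemma Xa_max (hn : 0 < n)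
    (ha : ∑ p ∈ Finset.Icc 1 n, a ((p : ℕ) : ZMod n) = n) :
    ∀ Y, PairwiseCompatible n Y → Xa n a ⊆ Y → Y = Xa n a := by
  intro Y hY hXY
  haveI : NeZero n := ⟨hn.ne'⟩
  apply Set.Subset.antisymm _ hXY
  intro arc harc
  cases arc with
  | proj j =>
    obtain ⟨j0, hj0⟩ := ZMod.intCast_surjective j
    by_cases hjp : psum n a j0 = pnorm n a
    · have hc : ((resRep n j0 : ℕ) : ZMod n) = j := by
        rw [← hj0]
        have := intCast_resRep (n := n) hn j0
        push_cast at this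
        exact this
      left
      refine ⟨resRep n j0,
        Finset.mem_Icc.mpr ⟨resRep_pos n j0, resRep_le hn j0⟩, ?_, by rw [hc]⟩
      exact (psum_resRep hn a j0).trans hjp
    · exfalso
      have hplt : psum n a j0 < pnorm n a :=
        lt_of_le_of_ne (psum_le_pnorm hn a j0) hjp
      obtain ⟨k, l, hk1, hk2, hk3, hk4, hk5, hmem⟩ := cover hn ha hplt
      have hcomp := hY.2 _ (hXY hmem) _ harc
      apply hcomp
      refine ⟨k, j0, rfl, hj0, hk1, ?_⟩
      rw [Int.toNat_of_nonneg (by omega : (0:ℤ) ≤ l - k)]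
      omega
  | inner i t =>
    have hadm := hY.1 _ harc
    obtain ⟨ht1, ht2⟩ := hadm
    obtain ⟨i0, hi0⟩ := ZMod.intCast_surjective i
    set l0 := i0 + (t : ℤ) with hl0
    have hInt : ∀ m, i0 < m → m < l0 → psum n a m < pnorm n a := by
      intro m h1 h2
      rcases lt_or_eq_of_le (psum_le_pnorm hn a m) with h | h
      · exact h
      exfalso
      have hrr := psum_resRep hn a m
      have hrrc := intCast_resRep (n := n) hn m
      push_cast at hrrc
      have hmemP : Arc.proj ((resRep n m : ℕ) : ZMod n) ∈ Xa n a := by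
        left
        exact ⟨resRep n m, Finset.mem_Icc.mpr ⟨resRep_pos n m, resRep_le hn m⟩,
          by rw [hrr]; exact h, rfl⟩
      have hcomp := hY.2 _ harc _ (hXY hmemP)
      exact hcomp ⟨i0, m, hi0, hrrc.symm, h1, by omega⟩
    have hA : ∀ m, i0 < m → m < l0 → psum n a m < psum n a i0 := by
      by_contra hcon; push_neg at hcon
      obtain ⟨m0, hm1, hm2, hm3⟩ := hcon
      set S : Set ℤ := {x | i0 < x ∧ psum n a i0 ≤ psum n a x} with hS
      have hne : S.Nonempty := ⟨m0, hm1, hm3⟩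
      have hbdd : BddBelow S := ⟨i0, fun x hx => le_of_lt hx.1⟩
      obtain ⟨hli, hlp⟩ : i0 < sInf S ∧ psum n a i0 ≤ psum n a (sInf S) :=
        Int.csInf_mem hne hbdd
      set l'' := sInf S with hl''def
      have hmin : ∀ x, i0 < x → x < l'' → psum n a x < psum n a i0 := by
        intro x h1 h2; by_contra hcx; push_neg at hcx
        have : l'' ≤ x := csInf_le hbdd ⟨h1, hcx⟩
        omega
      have hlm0 : l'' ≤ m0 := csInf_le hbdd ⟨hm1, hm3⟩
      have hl''lt : l'' < l0 := by omega
      have hpn : psum n a l'' < pnorm n a := hInt _ hli hl''lt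
      have hdelta : deltaInt n a l'' = 0 := by
        unfold deltaInt; rw [if_neg (by omega)]
      have hstep := psum_step hn ha l''
      have hs1 : 1 ≤ (a ((l'' : ℤ) : ZMod n) : ℤ) := by
        have hpl1 : psum n a (l'' - 1) ≤ psum n a i0 := by
          rcases eq_or_lt_of_le (show i0 ≤ l'' - 1 by omega) with h | h
          · rw [← h]
          · exact le_of_lt (hmin _ (by omega) (by omega))
        omega
      have hs2 : (a ((l'' : ℤ) : ZMod n) : ℤ)
          ≤ (a ((l'' : ℤ) : ZMod n) : ℤ) - deltaInt n a l'' := by omega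
      obtain ⟨hk1, hk2⟩ := kmax_spec hn ha hs1 hs2
      have hkint := kmax_interior hn ha hs1 hs2
      have hkgt := kmax_gt hn ha hs1 hs2
      set k'' := kmax n a l'' ((a ((l'' : ℤ) : ZMod n) : ℤ)) with hk''def
      have hkp : psum n a k'' = psum n a l'' + 1 := by omega
      have hki : k'' < i0 := by
        rcases lt_trichotomy k'' i0 with h | h | h
        · exact h
        · exfalso; rw [h] at hkp; omega
        · exfalso; have := hmin k'' h (by omega); omega
      have hmem : Arc.inner ((k'' : ZMod n)) ((l'' - k'').toNat) ∈ Xa n a := by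
        apply mem_Xa_inner hn ha (by omega) (by omega)
        · intro m h1 h2; have := hkint m h1 h2; omega
        · omega
      have hcomp := hY.2 _ harc _ (hXY hmem)
      apply hcomp
      refine ⟨i0, k'', hi0, rfl, Or.inr ⟨hki, ?_, ?_⟩⟩
      · rw [Int.toNat_of_nonneg (by omega : (0:ℤ) ≤ l'' - k'')]; omega
      · rw [Int.toNat_of_nonneg (by omega : (0:ℤ) ≤ l'' - k'')]; omega
    have hB : psum n a i0 ≤ psum n a l0 + 1 - deltaInt n a l0 := by
      by_contra hcon; push_neg at hcon
      have hd : deltaInt n a l0 = 0 := by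
        have h01 : deltaInt n a l0 = 0 ∨ deltaInt n a l0 = 1 := by
          have := deltaInt_nonneg n a l0; have := deltaInt_le_one n a l0; omega
        rcases h01 with h | h
        · exact h
        · exfalso
          have hps : psum n a l0 = pnorm n a := by
            unfold deltaInt at h
            by_contra hc; rw [if_neg hc] at h; omega
          have := psum_le_pnorm hn a i0
          omega
      rw [hd] at hcon
      have hplt : psum n a l0 < pnorm n a := by
        have h1 : psum n a l0 ≠ pnorm n a := by
          unfold deltaInt at hd
          by_contra hc; rw [if_pos hc] at hd; omega
        have := psum_le_pnorm hn a l0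
        omega
      obtain ⟨k, l, hc1, hc2, hc3, hc4, hc5, hmem⟩ := cover hn ha hplt
      have hstep := psum_step hn ha l0
      have hk0 : ∃ k0, i0 < k0 ∧ k0 < l0 ∧ psum n a k0 = psum n a l0 + 1 := by
        rcases le_or_gt (psum n a (l0 - 1)) (psum n a l0) with h | h
        · obtain ⟨k0, hk01, hk02, hk03, _⟩ :=
            ivt (v := psum n a l0 + 1) hn ha (show i0 ≤ l0 - 1 by omega)
              (by omega) (by omega)
          refine ⟨k0, ?_, by omega, hk03⟩
          rcases eq_or_lt_of_le hk01 with h' | h'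
          · exfalso; rw [← h'] at hk03; omega
          · exact h'
        · have ha0 : (a ((l0 : ℤ) : ZMod n) : ℤ) = 0 := by
            have := Int.natCast_nonneg (a ((l0 : ℤ) : ZMod n)); omega
          exact ⟨l0 - 1, by omega, by omega, by omega⟩
      obtain ⟨k0, hk01, hk02, hk03⟩ := hk0
      have hik : i0 < k := lt_of_lt_of_le hk01 (hc5 k0 (by omega) hk03)
      have hcomp := hY.2 _ harc _ (hXY hmem)
      apply hcomp
      refine ⟨i0, k, hi0, rfl, Or.inl ⟨hik, by omega, ?_⟩⟩
      rw [Int.toNat_of_nonneg (by omega : (0:ℤ) ≤ l - k)]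
      omega
    have hfin := mem_Xa_inner hn ha (show i0 + 2 ≤ l0 by omega)
      (show l0 ≤ i0 + n by omega) hA hB
    have harc_eq : Arc.inner i t = Arc.inner ((i0 : ZMod n)) ((l0 - i0).toNat) := by
      rw [← hi0]
      congr 1
      omega
    rw [harc_eq]
    exact hfin

end MaxLemmas


section TopLemmas

variable {n : ℕ} {a : ZMod n → ℕ}

lemma nat_rep_inj (hn : 0 < n) {j l : ℕ} (hj1 : 1 ≤ j) (hj2 : j ≤ n)
    (hl1 : 1 ≤ l) (hl2 : l ≤ n) (h : ((j : ℕ) : ZMod n) = ((l : ℕ) : ZMod n)) :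
    j = l := by
  have hc : ((j : ℤ) : ZMod n) = ((l : ℤ) : ZMod n) := by push_cast; exact_mod_cast h
  have hcong := resRep_congr (n := n) hn hc
  have h1 := resRep_eq_of_mem hn (show (1:ℤ) ≤ (j:ℤ) by exact_mod_cast hj1)
    (show (j:ℤ) ≤ (n:ℤ) by exact_mod_cast hj2)
  have h2 := resRep_eq_of_mem hn (show (1:ℤ) ≤ (l:ℤ) by exact_mod_cast hl1)
    (show (l:ℤ) ≤ (n:ℤ) by exact_mod_cast hl2)
  omega

lemma terminal_inner_cast {x y : ℤ} (hxy : x ≤ y) :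
    Arc.terminal (Arc.inner ((x : ZMod n)) ((y - x).toNat)) = ((y : ℤ) : ZMod n) := by
  show (x : ZMod n) + (((y - x).toNat : ℕ) : ZMod n) = (y : ZMod n)
  have h1 : (((y - x).toNat : ℕ) : ZMod n) = (((y - x) : ℤ) : ZMod n) := by
    rw [← Int.cast_natCast, Int.toNat_of_nonneg (by omega : (0:ℤ) ≤ y - x)]
  rw [h1]
  push_cast
  ring

lemma topSeq_Xa (hn : 0 < n)
    (ha : ∑ p ∈ Finset.Icc 1 n, a ((p : ℕ) : ZMod n) = n) :
    topSeq n (Xa n a) = a := by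
  haveI : NeZero n := ⟨hn.ne'⟩
  funext c
  set L : ℕ := resRep n ((c.val : ℕ) : ℤ) with hLdef
  have hL1 : 1 ≤ L := resRep_pos _ _
  have hL2 : L ≤ n := resRep_le hn _
  have hLc : ((L : ℕ) : ZMod n) = c := by
    have h1 := intCast_resRep (n := n) hn ((c.val : ℕ) : ℤ)
    push_cast at h1
    rw [hLdef, h1]
    exact ZMod.natCast_rightInverse c
  have hcastL : ((L : ℕ) : ZMod n) = (((L : ℤ)) : ZMod n) := by push_cast; ring
  have haL : (a (((L : ℤ)) : ZMod n) : ℤ) = (a c : ℤ) := by rw [← hcastL, hLc]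
  set d : ℤ := deltaInt n a (L : ℤ) with hd
  set m : ℤ := (a c : ℤ) - d with hm
  have hstepL := psum_step hn ha (L : ℤ)
  have hd01 : d = 0 ∨ d = 1 := by
    have := deltaInt_nonneg n a (L : ℤ); have := deltaInt_le_one n a (L : ℤ); omega
  have hdiff : d = 1 → psum n a (L : ℤ) = pnorm n a := by
    intro h
    rw [hd] at h
    unfold deltaInt at h
    by_contra hc
    rw [if_neg hc] at h
    omega
  have hdiff0 : psum n a (L : ℤ) = pnorm n a → d = 1 := by
    intro h; rw [hd]; unfold deltaInt; rw [if_pos h]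
  have hmnn : 0 ≤ m := by
    rcases hd01 with h | h
    · have := Int.natCast_nonneg (a c); omega
    · have hplm := psum_le_pnorm hn a ((L : ℤ) - 1)
      have hLp := hdiff h
      rw [haL] at hstepL
      omega
  -- the candidate description of arcs with terminal c
  set f : ℤ → Arc n := fun s => Arc.inner ((kmax n a (L : ℤ) s : ℤ) : ZMod n)
    (((L : ℤ) - kmax n a (L : ℤ) s).toNat) with hf
  have hs2gen : ∀ s : ℤ, s ≤ m →
      s ≤ (a (((L : ℤ)) : ZMod n) : ℤ) - deltaInt n a (L : ℤ) := by
    intro s hs; rw [haL, ← hd]; omega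
  have hset : {arc ∈ Xa n a | Arc.terminal arc = c}
      = f '' Set.Icc 1 m ∪
        (if psum n a (L : ℤ) = pnorm n a then {Arc.proj c} else ∅) := by
    ext arc
    constructor
    · rintro ⟨hXa, hterm⟩
      rcases hXa with ⟨j, hjmem, hjp, rfl⟩ | ⟨l, hlmem, s, hs1, hs2, rfl⟩
      · -- projective arc
        obtain ⟨hj1, hj2⟩ := Finset.mem_Icc.mp hjmem
        have hterm' : ((j : ℕ) : ZMod n) = c := hterm
        have hjL : j = L := nat_rep_inj hn hj1 hj2 hL1 hL2 (hterm'.trans hLc.symm)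
        subst hjL
        right
        rw [if_pos hjp]
        show Arc.proj ((L : ℕ) : ZMod n) ∈ ({Arc.proj c} : Set (Arc n))
        rw [hterm']
        exact rfl
      · -- inner arc
        obtain ⟨hl1, hl2⟩ := Finset.mem_Icc.mp hlmem
        have hcast' : ((l : ℕ) : ZMod n) = (((l : ℤ)) : ZMod n) := by push_cast; ring
        have hs2' : s ≤ (a (((l : ℤ)) : ZMod n) : ℤ) - deltaInt n a (l : ℤ) := by
          rw [← hcast']; exact hs2
        obtain ⟨hk1, hk2⟩ := kmax_spec hn ha hs1 hs2'
        have hterm2 : Arc.terminal (Arc.inner ((kmax n a (l : ℤ) s : ℤ) : ZMod n)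
            (((l : ℤ) - kmax n a (l : ℤ) s).toNat)) = (((l : ℤ)) : ZMod n) :=
          terminal_inner_cast (by omega)
        have hlL : l = L := by
          apply nat_rep_inj hn hl1 hl2 hL1 hL2
          rw [hcast', ← hterm2, hterm, ← hLc]
        subst hlL
        left
        refine ⟨s, ⟨hs1, ?_⟩, rfl⟩
        rw [hm, hd, ← haL]
        omega
    · intro harc
      rcases harc with ⟨s, ⟨hs1, hs2⟩, rfl⟩ | hproj
      · have hs2' := hs2gen s hs2
        obtain ⟨hk1, hk2⟩ := kmax_spec hn ha hs1 hs2'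
        constructor
        · right
          refine ⟨L, Finset.mem_Icc.mpr ⟨hL1, hL2⟩, s, hs1, ?_, rfl⟩
          rw [hcastL]
          exact hs2'
        · rw [hf]
          have := terminal_inner_cast (n := n) (x := kmax n a (L : ℤ) s)
            (y := (L : ℤ)) (by omega)
          rw [this, ← hcastL, hLc]
      · rcases Classical.em (psum n a (L : ℤ) = pnorm n a) with h | h
        · rw [if_pos h] at hproj
          rw [Set.mem_singleton_iff] at hproj
          subst hproj
          constructor
          · left
            exact ⟨L, Finset.mem_Icc.mpr ⟨hL1, hL2⟩, h, by rw [hLc]⟩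
          · exact rfl
        · rw [if_neg h] at hproj
          exact absurd hproj (Set.notMem_empty _)
  show {arc ∈ Xa n a | Arc.terminal arc = c}.ncard = a c
  rw [hset]
  have hfin1 : (f '' Set.Icc 1 m).Finite := (Set.finite_Icc 1 m).image f
  have hinj : Set.InjOn f (Set.Icc 1 m) := by
    intro s1 hs1' s2 hs2' heq
    obtain ⟨hs11, hs12⟩ := hs1'
    obtain ⟨hs21, hs22⟩ := hs2'
    obtain ⟨ha1, hb1⟩ := kmax_spec hn ha hs11 (hs2gen s1 hs12)
    obtain ⟨ha2, hb2⟩ := kmax_spec hn ha hs21 (hs2gen s2 hs22)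
    have hg1 := kmax_gt hn ha hs11 (hs2gen s1 hs12)
    have hg2 := kmax_gt hn ha hs21 (hs2gen s2 hs22)
    rw [hf] at heq
    injection heq with h1 h2
    have hkk : kmax n a (L : ℤ) s1 = kmax n a (L : ℤ) s2 := by omega
    rw [hkk] at hb1
    omega
  have hfin2 : (if psum n a (L : ℤ) = pnorm n a then ({Arc.proj c} : Set (Arc n))
      else ∅).Finite := by
    split_ifs
    · exact Set.finite_singleton _
    · exact Set.finite_empty
  have hdisj : Disjoint (f '' Set.Icc 1 m)
      (if psum n a (L : ℤ) = pnorm n a then ({Arc.proj c} : Set (Arc n)) else ∅) := by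
    split_ifs
    · rw [Set.disjoint_singleton_right]
      rintro ⟨s, hsmem, heq⟩
      rw [hf] at heq
      simp at heq
    · exact Set.disjoint_empty _
  rw [Set.ncard_union_eq hdisj hfin1 hfin2]
  rw [Set.ncard_image_of_injOn hinj]
  have hIcc : (Set.Icc (1:ℤ) m).ncard = m.toNat := by
    rw [← Finset.coe_Icc, Set.ncard_coe_finset, Int.card_Icc]
    simp
  rw [hIcc]
  rcases hd01 with h | h
  · have hne : ¬ psum n a (L : ℤ) = pnorm n a := by
      intro hc; have := hdiff0 hc; omega
    rw [if_neg hne]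
    simp only [Set.ncard_empty]
    omega
  · rw [if_pos (hdiff h)]
    rw [Set.ncard_singleton]
    omega

end TopLemmas

/-- **Adachi, Proposition 2.9.** For every `a ∈ 𝒵(n)`, the set `X_a` is a
triangulation of the punctured `n`-gon and `top(X_a) = a`. -/
theorem Xa_isTriangulation_and_top (n : ℕ) (hn : 0 < n) (a : ZMod n → ℕ)
    (ha : ∑ p ∈ Finset.Icc 1 n, a ((p : ℕ) : ZMod n) = n) :
    IsTriangulation n (Xa n a) ∧ topSeq n (Xa n a) = a :=
  ⟨⟨Xa_pairwise hn ha, Xa_max hn ha⟩, topSeq_Xa hn ha⟩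

end Punctured
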